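/- For every a > 0 and every t ∈ ℝ, the Laplace density is a scale mixture of normal densities with exponential mixing: ∫₀^∞ (2πs)^{-1/2} exp(−t²/(2s)) · (a²/2) exp(−a² s/2) ds = (a/2) exp(−a|t|). -/

import Mathlib

section LaplaceMixtureAux
open Real MeasureTheory Set

lemma aux_int1 {b c : ℝ} (hb : 0 ≤ b) (hc : 0 < c) :
    IntegrableOn (fun u : ℝ => Real.exp (-(c*u^2 + b/u^2))) (Ioi 0) := by
  apply Integrable.mono' ((integrable_exp_neg_mul_sq hc).restrict (s := Ioi 0))
  · apply ContinuousOn.aestronglyMeasurable _ measurableSet_Ioi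
    apply (Real.continuous_exp.comp_continuousOn ?_)
    apply ContinuousOn.neg
    exact (continuousOn_const.mul (continuousOn_pow 2)).add
      (continuousOn_const.div (continuousOn_pow 2) (fun x hx => pow_ne_zero _ (ne_of_gt hx)))
  · filter_upwards [ae_restrict_mem measurableSet_Ioi] with u hu
    rw [Real.norm_eq_abs, abs_of_pos (Real.exp_pos _)]
    apply Real.exp_le_exp.2
    have : 0 ≤ b / u^2 := div_nonneg hb (sq_nonneg u)
    nlinarith

lemma aux_int2 {b c : ℝ} (hb : 0 < b) (hc : 0 < c) :
    IntegrableOn (fun u : ℝ => (1/u^2) * Real.exp (-(c*u^2 + b/u^2))) (Ioi 0) := by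
  apply Integrable.mono' (((integrable_exp_neg_mul_sq hc).restrict (s := Ioi 0)).const_mul (1/b))
  · apply ContinuousOn.aestronglyMeasurable _ measurableSet_Ioi
    apply ContinuousOn.mul
    · exact continuousOn_const.div (continuousOn_pow 2) (fun x hx => pow_ne_zero _ (ne_of_gt hx))
    apply (Real.continuous_exp.comp_continuousOn ?_)
    apply ContinuousOn.neg
    exact (continuousOn_const.mul (continuousOn_pow 2)).add
      (continuousOn_const.div (continuousOn_pow 2) (fun x hx => pow_ne_zero _ (ne_of_gt hx)))
  · filter_upwards [ae_restrict_mem measurableSet_Ioi] with u hu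
    have hu2 : (0:ℝ) < u^2 := pow_pos hu 2
    rw [Real.norm_eq_abs, abs_of_pos (by positivity)]
    have key : (1/u^2) * Real.exp (-(b/u^2)) ≤ 1/b := by
      have h1 : b/u^2 ≤ Real.exp (b/u^2) := by linarith [Real.add_one_le_exp (b/u^2)]
      rw [Real.exp_neg, one_div, one_div, ← mul_inv, inv_le_inv₀ (by positivity) hb]
      calc b = (b/u^2) * u^2 := by rw [div_mul_cancel₀]; exact hu2.ne'
        _ ≤ Real.exp (b/u^2) * u^2 := mul_le_mul_of_nonneg_right h1 hu2.le
        _ = u^2 * Real.exp (b/u^2) := mul_comm _ _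
    calc (1/u^2) * Real.exp (-(c*u^2 + b/u^2))
        = ((1/u^2) * Real.exp (-(b/u^2))) * Real.exp (-(c*u^2)) := by
          rw [mul_assoc, ← Real.exp_add]; ring_nf
      _ ≤ (1/b) * Real.exp (-(c*u^2)) := by
          apply mul_le_mul_of_nonneg_right key (Real.exp_pos _).le
      _ = 1/b * Real.exp (-c*u^2) := by ring_nf

lemma aux_sym {b c : ℝ} (hb : 0 < b) (hc : 0 < c) :
    ∫ u in Ioi (0:ℝ), (1/u^2) * Real.exp (-(c*u^2 + b/u^2))
      = Real.sqrt (c/b) * ∫ u in Ioi (0:ℝ), Real.exp (-(c*u^2 + b/u^2)) := by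
  set k := Real.sqrt (b/c) with hk
  have hkpos : 0 < k := Real.sqrt_pos.2 (div_pos hb hc)
  have hksq : k^2 = b/c := Real.sq_sqrt (div_pos hb hc).le
  have himg : (fun v : ℝ => k / v) '' Ioi 0 = Ioi (0:ℝ) := by
    ext u
    constructor
    · rintro ⟨v, hv, rfl⟩; exact div_pos hkpos hv
    · intro hu
      exact ⟨k/u, div_pos hkpos hu, by field_simp⟩
  have hderiv : ∀ v ∈ Ioi (0:ℝ), HasDerivWithinAt (fun v : ℝ => k / v) (-(k/v^2)) (Ioi 0) v := by
    intro v hv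
    have h := ((hasDerivAt_inv (ne_of_gt hv)).const_mul k).hasDerivWithinAt (s := Ioi 0)
    simp only [div_eq_mul_inv]
    rw [show -(k * (v^2)⁻¹) = k * -(v^2)⁻¹ by ring]
    exact h
  have hinj : InjOn (fun v : ℝ => k / v) (Ioi 0) := by
    intro x hx y hy hxy
    simp only [div_eq_div_iff (ne_of_gt (show (0:ℝ) < x from hx)) (ne_of_gt (show (0:ℝ) < y from hy))] at hxy
    exact (mul_left_cancel₀ hkpos.ne' hxy).symm
  have := integral_image_eq_integral_abs_deriv_smul measurableSet_Ioi hderiv hinj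
    (fun u => (1/u^2) * Real.exp (-(c*u^2 + b/u^2)))
  rw [himg] at this
  rw [this, ← integral_const_mul]
  apply setIntegral_congr_fun measurableSet_Ioi
  intro v hv
  have hv' : (0:ℝ) < v := hv
  have h1 : |(-(k/v^2))| = k/v^2 := by
    rw [abs_neg, abs_of_pos (div_pos hkpos (pow_pos hv' 2))]
  simp only [smul_eq_mul]
  rw [h1]
  have h2 : c*(k/v)^2 + b/(k/v)^2 = c*v^2 + b/v^2 := by
    rw [div_pow, hksq]
    field_simp
    ring
  rw [h2]
  have h3 : k/v^2 * ((1/(k/v)^2) * Real.exp (-(c*v^2 + b/v^2)))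
      = (1/k) * Real.exp (-(c*v^2 + b/v^2)) := by
    rw [div_pow]
    field_simp
  rw [h3]
  congr 1
  rw [hk, one_div, ← Real.sqrt_inv, inv_div]

lemma aux_J {b c : ℝ} (hb : 0 < b) (hc : 0 < c) :
    ∫ v in Ioi (0:ℝ), (Real.sqrt c + Real.sqrt b/v^2)
        * Real.exp (-((Real.sqrt c * v - Real.sqrt b / v)^2)) = Real.sqrt Real.pi := by
  set p := Real.sqrt c with hp
  set q := Real.sqrt b with hq
  have hppos : 0 < p := Real.sqrt_pos.2 hc
  have hqpos : 0 < q := Real.sqrt_pos.2 hb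
  set f : ℝ → ℝ := fun v => p * v - q / v with hf
  have himg : f '' Ioi 0 = univ := by
    apply eq_univ_of_forall
    intro w
    set D := Real.sqrt (w^2 + 4*(p*q)) with hD
    have hDsq : D^2 = w^2 + 4*(p*q) := Real.sq_sqrt (by positivity)
    have hDgt : -w < D := by
      rcases le_or_gt w 0 with h | h
      · have : |w| < D := by
          rw [← Real.sqrt_sq_eq_abs, hD]
          apply Real.sqrt_lt_sqrt (sq_nonneg w)
          nlinarith
        calc -w ≤ |w| := neg_le_abs w
          _ < D := this
      · have hD0 : 0 ≤ D := Real.sqrt_nonneg _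
        linarith
    have hu : 0 < (w + D) / (2*p) := by
      apply div_pos (by linarith) (by linarith)
    refine ⟨(w + D)/(2*p), hu, ?_⟩
    show p * ((w + D)/(2*p)) - q / ((w + D)/(2*p)) = w
    have hwD : 0 < w + D := by linarith
    field_simp
    ring_nf
    nlinarith [hDsq]
  have hderiv : ∀ v ∈ Ioi (0:ℝ), HasDerivWithinAt f (p + q/v^2) (Ioi 0) v := by
    intro v hv
    have h1 : HasDerivAt f (p * 1 - q * (-(v^2)⁻¹)) v := by
      simp only [hf, div_eq_mul_inv]
      exact ((hasDerivAt_id v).const_mul p).sub ((hasDerivAt_inv (ne_of_gt hv)).const_mul q)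
    have : p * 1 - q * (-(v^2)⁻¹) = p + q/v^2 := by ring
    rw [this] at h1
    exact h1.hasDerivWithinAt
  have hinj : InjOn f (Ioi 0) := by
    have hmono : StrictMonoOn f (Ioi 0) := by
      intro x hx y hy hxy
      have hx' : (0:ℝ) < x := hx
      have hy' : (0:ℝ) < y := hy
      have h1 : p * x < p * y := by exact mul_lt_mul_of_pos_left hxy hppos
      have h2 : q / y ≤ q / x := by
        apply div_le_div_of_nonneg_left hqpos.le hx' hxy.le
      simp only [hf]
      linarith
    exact hmono.injOn
  have key := integral_image_eq_integral_abs_deriv_smul measurableSet_Ioi hderiv hinj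
    (fun w => Real.exp (-(w^2)))
  rw [himg] at key
  have hgauss : ∫ w in (univ : Set ℝ), Real.exp (-(w^2)) = Real.sqrt Real.pi := by
    rw [Measure.restrict_univ]
    have := integral_gaussian 1
    simpa using this
  rw [hgauss] at key
  have heq : ∫ v in Ioi (0:ℝ), (p + q/v^2) * Real.exp (-((p * v - q / v)^2))
      = ∫ x in Ioi (0:ℝ), |p + q/x^2| • Real.exp (-(f x^2)) := by
    apply setIntegral_congr_fun measurableSet_Ioi
    intro v hv
    have hv' : (0:ℝ) < v := hv
    have habs : |p + q/v^2| = p + q/v^2 := abs_of_pos (by positivity)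
    simp only [smul_eq_mul, habs, hf]
  rw [heq, ← key]

lemma glasser {b c : ℝ} (hb : 0 ≤ b) (hc : 0 < c) :
    ∫ u in Ioi (0:ℝ), Real.exp (-(c*u^2 + b/u^2))
      = Real.sqrt (Real.pi/c)/2 * Real.exp (-(2*Real.sqrt (b*c))) := by
  rcases eq_or_lt_of_le hb with rfl | hb
  · simp only [zero_div, add_zero, zero_mul, Real.sqrt_zero, mul_zero, neg_zero, Real.exp_zero,
      mul_one]
    rw [← integral_gaussian_Ioi c]
    simp only [neg_mul]
  · set I := ∫ u in Ioi (0:ℝ), Real.exp (-(c*u^2 + b/u^2)) with hI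
    set p := Real.sqrt c with hp
    set q := Real.sqrt b with hq
    have hppos : 0 < p := Real.sqrt_pos.2 hc
    have hqpos : 0 < q := Real.sqrt_pos.2 hb
    have hexpand : ∀ v ∈ Ioi (0:ℝ),
        (p + q/v^2) * Real.exp (-((p * v - q / v)^2))
          = Real.exp (2*Real.sqrt (b*c)) *
              (p * Real.exp (-(c*v^2 + b/v^2)) + q * ((1/v^2) * Real.exp (-(c*v^2 + b/v^2)))) := by
      intro v hv
      have hv' : (0:ℝ) < v := hv
      have hsq : (p * v - q / v)^2 = c*v^2 + b/v^2 - 2*Real.sqrt (b*c) := by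
        have h1 : p^2 = c := Real.sq_sqrt hc.le
        have h2 : q^2 = b := Real.sq_sqrt hb.le
        have h3 : Real.sqrt (b*c) = q * p := Real.sqrt_mul hb.le c
        rw [h3]
        field_simp
        linear_combination (v^2*v^2)*h1 + h2 - 2*v^2*(rfl : q * p = Real.sqrt b * Real.sqrt c)
      rw [hsq, show -(c*v^2 + b/v^2 - 2*Real.sqrt (b*c))
          = 2*Real.sqrt (b*c) + -(c*v^2 + b/v^2) by ring, Real.exp_add]
      ring
    have hJ := aux_J hb hc
    rw [setIntegral_congr_fun measurableSet_Ioi hexpand] at hJ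
    rw [integral_const_mul, integral_add ((aux_int1 hb.le hc).const_mul p)
      ((aux_int2 hb hc).const_mul q), integral_const_mul, integral_const_mul, aux_sym hb hc] at hJ
    have hqc : q * (Real.sqrt (c/b) * I) = p * I := by
      rw [← mul_assoc]
      congr 1
      rw [hq, hp, ← Real.sqrt_mul hb.le, mul_div_cancel₀ _ (ne_of_gt hb)]
    rw [hqc, ← hI] at hJ
    have h2p : Real.exp (2*Real.sqrt (b*c)) * (p * I + p * I)
        = 2 * p * Real.exp (2*Real.sqrt (b*c)) * I := by ring
    rw [h2p] at hJ
    have hne : 2 * p * Real.exp (2*Real.sqrt (b*c)) ≠ 0 := by positivity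
    have hIeq : I = Real.sqrt Real.pi / (2 * p * Real.exp (2*Real.sqrt (b*c))) := by
      rw [eq_div_iff hne]
      linarith [hJ]
    rw [hIeq, Real.sqrt_div Real.pi_nonneg, Real.exp_neg, hp]
    field_simp

/-- The Laplace density as a scale mixture of normal densities with exponential
mixing distribution. -/
theorem stmt_9 (a t : ℝ) (ha : 0 < a) :
    ∫ s in Set.Ioi (0:ℝ),
        (1 / Real.sqrt (2 * Real.pi * s)) * Real.exp (-t ^ 2 / (2 * s)) *
          (a ^ 2 / 2 * Real.exp (-(a ^ 2) * s / 2))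
      = a / 2 * Real.exp (-a * |t|) := by
  set F : ℝ → ℝ := fun s =>
    (1 / Real.sqrt (2 * Real.pi * s)) * Real.exp (-t ^ 2 / (2 * s)) *
      (a ^ 2 / 2 * Real.exp (-(a ^ 2) * s / 2)) with hF
  have himg : (fun u : ℝ => u^2) '' Ioi 0 = Ioi (0:ℝ) := by
    ext s
    constructor
    · rintro ⟨u, hu, rfl⟩; exact pow_pos (show (0:ℝ) < u from hu) 2
    · intro hs
      exact ⟨Real.sqrt s, Real.sqrt_pos.2 hs, Real.sq_sqrt (le_of_lt hs)⟩
  have hderiv : ∀ u ∈ Ioi (0:ℝ), HasDerivWithinAt (fun u : ℝ => u^2) (2*u) (Ioi 0) u := by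
    intro u hu
    simpa using ((hasDerivAt_pow 2 u).hasDerivWithinAt (s := Ioi 0))
  have hinj : InjOn (fun u : ℝ => u^2) (Ioi 0) := by
    intro x hx y hy hxy
    simp only at hxy
    have hx' : (0:ℝ) < x := hx
    have hy' : (0:ℝ) < y := hy
    nlinarith
  have key := integral_image_eq_integral_abs_deriv_smul measurableSet_Ioi hderiv hinj F
  rw [himg] at key
  rw [key]
  have hcongr : ∀ u ∈ Ioi (0:ℝ), |2*u| • F (u^2)
      = (a^2 / Real.sqrt (2*Real.pi)) * Real.exp (-((a^2/2)*u^2 + (t^2/2)/u^2)) := by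
    intro u hu
    have hu' : (0:ℝ) < u := hu
    have hsqrt : Real.sqrt (2*Real.pi*u^2) = Real.sqrt (2*Real.pi) * u := by
      rw [Real.sqrt_mul (by positivity), Real.sqrt_sq hu'.le]
    have hs2 : Real.sqrt (2*Real.pi) ≠ 0 := by positivity
    have hexp : Real.exp (-((a^2/2)*u^2 + (t^2/2)/u^2))
        = Real.exp (-t^2/(2*u^2)) * Real.exp (-(a^2)*u^2/2) := by
      rw [← Real.exp_add]
      congr 1
      rw [div_div]
      ring
    simp only [smul_eq_mul, hF, hsqrt, abs_of_pos (show (0:ℝ) < 2*u by linarith)]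
    rw [hexp]
    field_simp
  rw [setIntegral_congr_fun measurableSet_Ioi hcongr, integral_const_mul,
    glasser (by positivity : (0:ℝ) ≤ t^2/2) (by positivity : (0:ℝ) < a^2/2)]
  have h1 : Real.sqrt (Real.pi/(a^2/2)) = Real.sqrt (2*Real.pi) / a := by
    rw [show Real.pi/(a^2/2) = (2*Real.pi)/a^2 by ring, Real.sqrt_div (by positivity),
      Real.sqrt_sq ha.le]
  have h2 : 2*Real.sqrt ((t^2/2)*(a^2/2)) = a * |t| := by
    rw [show (t^2/2)*(a^2/2) = (|t| * a / 2)^2 by rw [div_pow, mul_pow, sq_abs]; ring,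
      Real.sqrt_sq (by positivity)]
    ring
  rw [h1, h2]
  have hs2 : Real.sqrt (2*Real.pi) ≠ 0 := by positivity
  rw [show -a * |t| = -(a * |t|) by ring]
  field_simp

end LaplaceMixtureAux
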